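/- Let (E¹₊, E¹₋, d¹₊, d¹₋) and (E²₊, E²₋, d²₊, d²₋) be 2-periodic complexes of finite-dimensional k-vector spaces, and suppose E¹ is exact. Then the tensor product 2-periodic complex E¹ ⊗ E² (with Koszul-sign differentials) is exact. -/

import Mathlib

open TensorProduct Module LinearMap

/-- An exact 2-periodic complex of vector spaces admits a contracting homotopy. -/
lemma homotopy_of_exact {k : Type*} [Field k] {A B : Type*}
    [AddCommGroup A] [Module k A] [AddCommGroup B] [Module k B]
    (f : A →ₗ[k] B) (g : B →ₗ[k] A)
    (hex1 : LinearMap.ker f = LinearMap.range g)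
    (hex2 : LinearMap.ker g = LinearMap.range f) :
    ∃ (hp : A →ₗ[k] B) (hm : B →ₗ[k] A),
      (∀ a : A, hm (f a) + g (hp a) = a) ∧
      (∀ b : B, hp (g b) + f (hm b) = b) := by
  obtain ⟨Cp, hCp⟩ := Submodule.exists_isCompl (LinearMap.ker f)
  obtain ⟨Cm, hCm⟩ := Submodule.exists_isCompl (LinearMap.ker g)
  -- f restricted to Cp lands in (LinearMap.ker g) and is bijective onto (LinearMap.ker g)
  have hfK : ∀ x : Cp, f x ∈ (LinearMap.ker g) := fun x => by
    rw [hex2]; exact ⟨x, rfl⟩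
  have hgK : ∀ x : Cm, g x ∈ (LinearMap.ker f) := fun x => by
    rw [hex1]; exact ⟨x, rfl⟩
  set φ : Cp →ₗ[k] (LinearMap.ker g) := (f.domRestrict Cp).codRestrict (LinearMap.ker g) hfK with hφ
  set ψ : Cm →ₗ[k] (LinearMap.ker f) := (g.domRestrict Cm).codRestrict (LinearMap.ker f) hgK with hψ
  have hφb : Function.Bijective φ := by
    constructor
    · intro x y hxy
      have h1 : f (x - y : Cp) = 0 := by
        have : f x = f y := congrArg Subtype.val hxy
        simp [map_sub, this]
      have h2 : ((x - y : Cp) : A) ∈ (LinearMap.ker f) ⊓ Cp := ⟨h1, (x - y).2⟩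
      rw [hCp.inf_eq_bot] at h2
      exact sub_eq_zero.mp (Subtype.ext_iff.mpr h2)
    · rintro ⟨y, hy⟩
      rw [hex2] at hy
      obtain ⟨a, rfl⟩ := hy
      refine ⟨⟨Cp.linearProjOfIsCompl (LinearMap.ker f) hCp.symm a, Subtype.coe_prop _⟩, ?_⟩
      apply Subtype.ext
      show f (Cp.linearProjOfIsCompl (LinearMap.ker f) hCp.symm a : A) = f a
      have hd : (((LinearMap.ker f).linearProjOfIsCompl Cp hCp a : A)
          + (Cp.linearProjOfIsCompl (LinearMap.ker f) hCp.symm a : A)) = a :=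
        Submodule.projection_add_projection_eq_self hCp a
      have : f a = f (((LinearMap.ker f).linearProjOfIsCompl Cp hCp a : A)
          + (Cp.linearProjOfIsCompl (LinearMap.ker f) hCp.symm a : A)) := by rw [hd]
      rw [this, map_add]
      have hker : f (((LinearMap.ker f).linearProjOfIsCompl Cp hCp a : A)) = 0 :=
        ((LinearMap.ker f).linearProjOfIsCompl Cp hCp a).2
      rw [hker, zero_add]
  have hψb : Function.Bijective ψ := by
    constructor
    · intro x y hxy
      have h1 : g (x - y : Cm) = 0 := by
        have : g x = g y := congrArg Subtype.val hxy
        simp [map_sub, this]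
      have h2 : ((x - y : Cm) : B) ∈ (LinearMap.ker g) ⊓ Cm := ⟨h1, (x - y).2⟩
      rw [hCm.inf_eq_bot] at h2
      exact sub_eq_zero.mp (Subtype.ext_iff.mpr h2)
    · rintro ⟨y, hy⟩
      rw [hex1] at hy
      obtain ⟨b, rfl⟩ := hy
      refine ⟨⟨Cm.linearProjOfIsCompl (LinearMap.ker g) hCm.symm b, Subtype.coe_prop _⟩, ?_⟩
      apply Subtype.ext
      show g (Cm.linearProjOfIsCompl (LinearMap.ker g) hCm.symm b : B) = g b
      have hd : (((LinearMap.ker g).linearProjOfIsCompl Cm hCm b : B)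
          + (Cm.linearProjOfIsCompl (LinearMap.ker g) hCm.symm b : B)) = b :=
        Submodule.projection_add_projection_eq_self hCm b
      have : g b = g (((LinearMap.ker g).linearProjOfIsCompl Cm hCm b : B)
          + (Cm.linearProjOfIsCompl (LinearMap.ker g) hCm.symm b : B)) := by rw [hd]
      rw [this, map_add]
      have hker : g (((LinearMap.ker g).linearProjOfIsCompl Cm hCm b : B)) = 0 :=
        ((LinearMap.ker g).linearProjOfIsCompl Cm hCm b).2
      rw [hker, zero_add]
  set e : Cp ≃ₗ[k] (LinearMap.ker g) := LinearEquiv.ofBijective φ hφb with he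
  set e' : Cm ≃ₗ[k] (LinearMap.ker f) := LinearEquiv.ofBijective ψ hψb with he'
  refine ⟨Cm.subtype ∘ₗ (e'.symm : (LinearMap.ker f) →ₗ[k] Cm) ∘ₗ (LinearMap.ker f).linearProjOfIsCompl Cp hCp,
          Cp.subtype ∘ₗ (e.symm : (LinearMap.ker g) →ₗ[k] Cp) ∘ₗ (LinearMap.ker g).linearProjOfIsCompl Cm hCm,
          ?_, ?_⟩
  · intro a
    set kp := (LinearMap.ker f).linearProjOfIsCompl Cp hCp a with hkp
    set cp := Cp.linearProjOfIsCompl (LinearMap.ker f) hCp.symm a with hcp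
    have hd : (kp : A) + (cp : A) = a :=
      Submodule.projection_add_projection_eq_self hCp a
    have hfa : f a ∈ (LinearMap.ker g) := by rw [hex2]; exact ⟨a, rfl⟩
    have h1 : (LinearMap.ker g).linearProjOfIsCompl Cm hCm (f a) = ⟨f a, hfa⟩ :=
      Submodule.linearProjOfIsCompl_apply_left hCm ⟨f a, hfa⟩
    have hecp : e cp = ⟨f a, hfa⟩ := by
      apply Subtype.ext
      show f (cp : A) = f a
      conv_rhs => rw [← hd]
      rw [map_add]
      have : f (kp : A) = 0 := kp.2
      rw [this, zero_add]
    have h2 : e.symm ⟨f a, hfa⟩ = cp := by rw [← hecp]; exact e.symm_apply_apply cp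
    have h3 : ∀ x : (LinearMap.ker f), g ((e'.symm x : Cm) : B) = (x : A) := by
      intro x
      have : e' (e'.symm x) = x := e'.apply_symm_apply x
      have := congrArg Subtype.val this
      exact this
    simp only [LinearMap.comp_apply, Submodule.subtype_apply, LinearEquiv.coe_coe]
    rw [h1, h2, h3]
    rw [add_comm]
    exact hd
  · intro b
    set km := (LinearMap.ker g).linearProjOfIsCompl Cm hCm b with hkm
    set cm := Cm.linearProjOfIsCompl (LinearMap.ker g) hCm.symm b with hcm
    have hd : (km : B) + (cm : B) = b :=
      Submodule.projection_add_projection_eq_self hCm b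
    have hgb : g b ∈ (LinearMap.ker f) := by rw [hex1]; exact ⟨b, rfl⟩
    have h1 : (LinearMap.ker f).linearProjOfIsCompl Cp hCp (g b) = ⟨g b, hgb⟩ :=
      Submodule.linearProjOfIsCompl_apply_left hCp ⟨g b, hgb⟩
    have hecm : e' cm = ⟨g b, hgb⟩ := by
      apply Subtype.ext
      show g (cm : B) = g b
      conv_rhs => rw [← hd]
      rw [map_add]
      have : g (km : B) = 0 := km.2
      rw [this, zero_add]
    have h2 : e'.symm ⟨g b, hgb⟩ = cm := by rw [← hecm]; exact e'.symm_apply_apply cm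
    have h3 : ∀ x : (LinearMap.ker g), f ((e.symm x : Cp) : A) = (x : B) := by
      intro x
      have : e (e.symm x) = x := e.apply_symm_apply x
      exact congrArg Subtype.val this
    simp only [LinearMap.comp_apply, Submodule.subtype_apply, LinearEquiv.coe_coe]
    rw [h1, h2, h3]
    rw [add_comm]
    exact hd

/-- If `E¹` is an exact 2-periodic complex, then the tensor product 2-periodic
complex `E¹ ⊗ E²` (with Koszul-sign differentials) is exact. -/
theorem tensor_with_exact_is_exact
    (k : Type*) [Field k]
    (E1p E1m E2p E2m : Type*)
    [AddCommGroup E1p] [Module k E1p] [FiniteDimensional k E1p]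
    [AddCommGroup E1m] [Module k E1m] [FiniteDimensional k E1m]
    [AddCommGroup E2p] [Module k E2p] [FiniteDimensional k E2p]
    [AddCommGroup E2m] [Module k E2m] [FiniteDimensional k E2m]
    (d1p : E1p →ₗ[k] E1m) (d1m : E1m →ₗ[k] E1p)
    (d2p : E2p →ₗ[k] E2m) (d2m : E2m →ₗ[k] E2p)
    (h1mp : d1m ∘ₗ d1p = 0) (h1pm : d1p ∘ₗ d1m = 0)
    (h2mp : d2m ∘ₗ d2p = 0) (h2pm : d2p ∘ₗ d2m = 0)
    (hex1 : ker d1p = range d1m) (hex2 : ker d1m = range d1p)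
    (Dp : (E1p ⊗[k] E2p) × (E1m ⊗[k] E2m) →ₗ[k] (E1p ⊗[k] E2m) × (E1m ⊗[k] E2p))
    (Dm : (E1p ⊗[k] E2m) × (E1m ⊗[k] E2p) →ₗ[k] (E1p ⊗[k] E2p) × (E1m ⊗[k] E2m))
    (hDp : ∀ (x : E1p) (y : E2p) (u : E1m) (v : E2m),
      Dp (x ⊗ₜ y, u ⊗ₜ v) =
        (x ⊗ₜ d2p y + d1m u ⊗ₜ v, d1p x ⊗ₜ y - u ⊗ₜ d2m v))
    (hDm : ∀ (x : E1p) (y : E2m) (u : E1m) (v : E2p),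
      Dm (x ⊗ₜ y, u ⊗ₜ v) =
        (x ⊗ₜ d2m y + d1m u ⊗ₜ v, d1p x ⊗ₜ y - u ⊗ₜ d2p v)) :
    ker Dp = range Dm ∧ ker Dm = range Dp := by
  obtain ⟨hp, hm, H1, H2⟩ := homotopy_of_exact d1p d1m hex1 hex2
  have h1mp' : ∀ x, d1m (d1p x) = 0 := fun x => congrFun (congrArg DFunLike.coe h1mp) x
  have h1pm' : ∀ x, d1p (d1m x) = 0 := fun x => congrFun (congrArg DFunLike.coe h1pm) x
  have h2mp' : ∀ x, d2m (d2p x) = 0 := fun x => congrFun (congrArg DFunLike.coe h2mp) x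
  have h2pm' : ∀ x, d2p (d2m x) = 0 := fun x => congrFun (congrArg DFunLike.coe h2pm) x
  -- structural models of Dp and Dm
  set Dp' : (E1p ⊗[k] E2p) × (E1m ⊗[k] E2m) →ₗ[k] (E1p ⊗[k] E2m) × (E1m ⊗[k] E2p) :=
    LinearMap.prod
      ((TensorProduct.map LinearMap.id d2p) ∘ₗ LinearMap.fst k _ _
        + (TensorProduct.map d1m LinearMap.id) ∘ₗ LinearMap.snd k _ _)
      ((TensorProduct.map d1p LinearMap.id) ∘ₗ LinearMap.fst k _ _
        - (TensorProduct.map LinearMap.id d2m) ∘ₗ LinearMap.snd k _ _) with hDp'def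
  set Dm' : (E1p ⊗[k] E2m) × (E1m ⊗[k] E2p) →ₗ[k] (E1p ⊗[k] E2p) × (E1m ⊗[k] E2m) :=
    LinearMap.prod
      ((TensorProduct.map LinearMap.id d2m) ∘ₗ LinearMap.fst k _ _
        + (TensorProduct.map d1m LinearMap.id) ∘ₗ LinearMap.snd k _ _)
      ((TensorProduct.map d1p LinearMap.id) ∘ₗ LinearMap.fst k _ _
        - (TensorProduct.map LinearMap.id d2p) ∘ₗ LinearMap.snd k _ _) with hDm'def
  have hDpeq : Dp = Dp' := by
    apply LinearMap.prod_ext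
    · apply TensorProduct.ext'
      intro a b
      have := hDp a b 0 0
      simp only [TensorProduct.zero_tmul] at this
      simp [LinearMap.comp_apply, this, hDp'def]
    · apply TensorProduct.ext'
      intro c d
      have := hDp 0 0 c d
      simp only [TensorProduct.zero_tmul] at this
      simp [LinearMap.comp_apply, this, hDp'def, sub_eq_neg_add]
  have hDmeq : Dm = Dm' := by
    apply LinearMap.prod_ext
    · apply TensorProduct.ext'
      intro a b
      have := hDm a b 0 0
      simp only [TensorProduct.zero_tmul] at this
      simp [LinearMap.comp_apply, this, hDm'def]
    · apply TensorProduct.ext'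
      intro c d
      have := hDm 0 0 c d
      simp only [TensorProduct.zero_tmul] at this
      simp [LinearMap.comp_apply, this, hDm'def, sub_eq_neg_add]
  -- homotopies on the tensor product complex
  set He : (E1p ⊗[k] E2p) × (E1m ⊗[k] E2m) →ₗ[k] (E1p ⊗[k] E2m) × (E1m ⊗[k] E2p) :=
    LinearMap.prod ((TensorProduct.map hm LinearMap.id) ∘ₗ LinearMap.snd k _ _)
      ((TensorProduct.map hp LinearMap.id) ∘ₗ LinearMap.fst k _ _) with hHe
  set Ho : (E1p ⊗[k] E2m) × (E1m ⊗[k] E2p) →ₗ[k] (E1p ⊗[k] E2p) × (E1m ⊗[k] E2m) :=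
    LinearMap.prod ((TensorProduct.map hm LinearMap.id) ∘ₗ LinearMap.snd k _ _)
      ((TensorProduct.map hp LinearMap.id) ∘ₗ LinearMap.fst k _ _) with hHo
  have key1 : Ho ∘ₗ Dp' + Dm' ∘ₗ He = LinearMap.id := by
    apply LinearMap.prod_ext
    · apply TensorProduct.ext'
      intro a b
      simp only [hDp'def, hDm'def, hHe, hHo, LinearMap.add_apply, LinearMap.comp_apply,
        LinearMap.coe_inl, LinearMap.prod_apply, Pi.prod, LinearMap.fst_apply,
        LinearMap.snd_apply, LinearMap.sub_apply, map_zero, map_sub, map_add,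
        TensorProduct.map_tmul, LinearMap.id_coe, id_eq, LinearMap.id_apply,
        TensorProduct.tmul_zero, TensorProduct.zero_tmul]
      ext <;> simp [h1mp', h1pm', TensorProduct.zero_tmul, ← TensorProduct.add_tmul, H1 a]
    · apply TensorProduct.ext'
      intro c d
      simp only [hDp'def, hDm'def, hHe, hHo, LinearMap.add_apply, LinearMap.comp_apply,
        LinearMap.coe_inr, LinearMap.prod_apply, Pi.prod, LinearMap.fst_apply,
        LinearMap.snd_apply, LinearMap.sub_apply, map_zero, map_sub, map_add, map_neg,
        TensorProduct.map_tmul, LinearMap.id_coe, id_eq, LinearMap.id_apply,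
        TensorProduct.tmul_zero, TensorProduct.zero_tmul]
      ext <;> simp [h1mp', h1pm', ← TensorProduct.add_tmul, H2 c]
  have key2 : He ∘ₗ Dm' + Dp' ∘ₗ Ho = LinearMap.id := by
    apply LinearMap.prod_ext
    · apply TensorProduct.ext'
      intro a b
      simp only [hDp'def, hDm'def, hHe, hHo, LinearMap.add_apply, LinearMap.comp_apply,
        LinearMap.coe_inl, LinearMap.prod_apply, Pi.prod, LinearMap.fst_apply,
        LinearMap.snd_apply, LinearMap.sub_apply, map_zero, map_sub, map_add,
        TensorProduct.map_tmul, LinearMap.id_coe, id_eq, LinearMap.id_apply,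
        TensorProduct.tmul_zero, TensorProduct.zero_tmul]
      ext <;> simp [h1mp', h1pm', ← TensorProduct.add_tmul, H1 a]
    · apply TensorProduct.ext'
      intro c d
      simp only [hDp'def, hDm'def, hHe, hHo, LinearMap.add_apply, LinearMap.comp_apply,
        LinearMap.coe_inr, LinearMap.prod_apply, Pi.prod, LinearMap.fst_apply,
        LinearMap.snd_apply, LinearMap.sub_apply, map_zero, map_sub, map_add, map_neg,
        TensorProduct.map_tmul, LinearMap.id_coe, id_eq, LinearMap.id_apply,
        TensorProduct.tmul_zero, TensorProduct.zero_tmul]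
      ext <;> simp [h1mp', h1pm', ← TensorProduct.add_tmul, H2 c]
  have dd1 : Dp' ∘ₗ Dm' = 0 := by
    apply LinearMap.prod_ext
    · apply TensorProduct.ext'
      intro a b
      simp only [hDp'def, hDm'def, LinearMap.comp_apply, LinearMap.coe_inl,
        LinearMap.prod_apply, Pi.prod, LinearMap.add_apply, LinearMap.sub_apply,
        LinearMap.fst_apply, LinearMap.snd_apply, map_zero, map_sub, map_add,
        TensorProduct.map_tmul, LinearMap.id_coe, id_eq, LinearMap.id_apply,
        LinearMap.zero_apply, LinearMap.zero_comp]
      ext <;> simp [h1mp', h1pm', h2mp', h2pm']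
    · apply TensorProduct.ext'
      intro c d
      simp only [hDp'def, hDm'def, LinearMap.comp_apply, LinearMap.coe_inr,
        LinearMap.prod_apply, Pi.prod, LinearMap.add_apply, LinearMap.sub_apply,
        LinearMap.fst_apply, LinearMap.snd_apply, map_zero, map_sub, map_add, map_neg,
        TensorProduct.map_tmul, LinearMap.id_coe, id_eq, LinearMap.id_apply,
        LinearMap.zero_apply, LinearMap.zero_comp]
      ext <;> simp [h1mp', h1pm', h2mp', h2pm']
  have dd2 : Dm' ∘ₗ Dp' = 0 := by
    apply LinearMap.prod_ext
    · apply TensorProduct.ext'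
      intro a b
      simp only [hDp'def, hDm'def, LinearMap.comp_apply, LinearMap.coe_inl,
        LinearMap.prod_apply, Pi.prod, LinearMap.add_apply, LinearMap.sub_apply,
        LinearMap.fst_apply, LinearMap.snd_apply, map_zero, map_sub, map_add,
        TensorProduct.map_tmul, LinearMap.id_coe, id_eq, LinearMap.id_apply,
        LinearMap.zero_apply, LinearMap.zero_comp]
      ext <;> simp [h1mp', h1pm', h2mp', h2pm']
    · apply TensorProduct.ext'
      intro c d
      simp only [hDp'def, hDm'def, LinearMap.comp_apply, LinearMap.coe_inr,
        LinearMap.prod_apply, Pi.prod, LinearMap.add_apply, LinearMap.sub_apply,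
        LinearMap.fst_apply, LinearMap.snd_apply, map_zero, map_sub, map_add, map_neg,
        TensorProduct.map_tmul, LinearMap.id_coe, id_eq, LinearMap.id_apply,
        LinearMap.zero_apply, LinearMap.zero_comp]
      ext <;> simp [h1mp', h1pm', h2mp', h2pm']
  rw [hDpeq, hDmeq]
  constructor
  · apply le_antisymm
    · intro z hz
      have hz' : Dp' z = 0 := hz
      have := congrFun (congrArg DFunLike.coe key1) z
      simp only [LinearMap.add_apply, LinearMap.comp_apply, LinearMap.id_apply, hz',
        map_zero, zero_add] at this
      exact ⟨He z, this⟩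
    · rintro _ ⟨w, rfl⟩
      have : Dp' (Dm' w) = 0 := congrFun (congrArg DFunLike.coe dd1) w
      exact this
  · apply le_antisymm
    · intro z hz
      have hz' : Dm' z = 0 := hz
      have := congrFun (congrArg DFunLike.coe key2) z
      simp only [LinearMap.add_apply, LinearMap.comp_apply, LinearMap.id_apply, hz',
        map_zero, zero_add] at this
      exact ⟨Ho z, this⟩
    · rintro _ ⟨w, rfl⟩
      have : Dm' (Dp' w) = 0 := congrFun (congrArg DFunLike.coe dd2) w
      exact this
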